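/- Let V : ℝ → ℝ be real analytic on (0,∞) and let V_eff(r, ℓ) = V(r) + ℓ/(2r²). If two differentiable branches of critical points r₁(ℓ) ≠ r₂(ℓ) have equal critical values V_eff(r₁(ℓ₀), ℓ₀) = V_eff(r₂(ℓ₀), ℓ₀) at some ℓ₀, then the derivatives of the two critical values with respect to ℓ differ at ℓ₀; in particular the critical values are distinct for ℓ ≠ ℓ₀ near ℓ₀. -/

import Mathlib

open Set Real Filter Topology

/-- Envelope lemma: along a differentiable branch of critical points, the
critical value has derivative `1 / (2 r(ℓ₀)²)` with respect to `ℓ`. -/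
lemma envelope_hasDerivAt (V : ℝ → ℝ) (r : ℝ → ℝ) (ℓ₀ : ℝ)
    (hr : 0 < r ℓ₀) (hVd : DifferentiableAt ℝ V (r ℓ₀))
    (hrd : DifferentiableAt ℝ r ℓ₀)
    (hcrit : deriv (fun s => V s + ℓ₀ / (2 * s ^ 2)) (r ℓ₀) = 0) :
    HasDerivAt (fun ℓ => V (r ℓ) + ℓ / (2 * (r ℓ) ^ 2))
      (1 / (2 * (r ℓ₀) ^ 2)) ℓ₀ := by
  set r₀ := r ℓ₀ with hr₀
  have hr0 : r₀ ≠ 0 := ne_of_gt hr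
  -- first compute deriv V r₀ from the criticality condition
  have hA : HasDerivAt (fun s : ℝ => 2 * s ^ 2) (2 * (2 * r₀ ^ 1 * 1)) r₀ :=
    (((hasDerivAt_id r₀).pow 2)).const_mul 2
  have hne2 : 2 * r₀ ^ 2 ≠ 0 := by positivity
  have hB : HasDerivAt (fun s : ℝ => ℓ₀ / (2 * s ^ 2))
      (ℓ₀ * (-(2 * (2 * r₀ ^ 1 * 1)) / (2 * r₀ ^ 2) ^ 2)) r₀ := by
    simpa [div_eq_mul_inv] using (hA.inv hne2).const_mul ℓ₀
  have hsum : deriv (fun s => V s + ℓ₀ / (2 * s ^ 2)) r₀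
      = deriv V r₀ + ℓ₀ * (-(2 * (2 * r₀ ^ 1 * 1)) / (2 * r₀ ^ 2) ^ 2) := by
    rw [deriv_fun_add hVd hB.differentiableAt, hB.deriv]
  have hV' : deriv V r₀ = ℓ₀ / r₀ ^ 3 := by
    have h0 : deriv V r₀ + ℓ₀ * (-(2 * (2 * r₀ ^ 1 * 1)) / (2 * r₀ ^ 2) ^ 2) = 0 := by
      rw [← hsum]; exact hcrit
    have hx : ℓ₀ * (-(2 * (2 * r₀ ^ 1 * 1)) / (2 * r₀ ^ 2) ^ 2) = -(ℓ₀ / r₀ ^ 3) := by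
      field_simp
    rw [hx] at h0
    linarith
  -- now the envelope computation
  have h1 : HasDerivAt (fun ℓ => V (r ℓ)) (deriv V r₀ * deriv r ℓ₀) ℓ₀ :=
    (hVd.hasDerivAt).comp ℓ₀ hrd.hasDerivAt
  have h2 : HasDerivAt (fun ℓ => 2 * (r ℓ) ^ 2)
      (2 * (2 * r₀ ^ 1 * deriv r ℓ₀)) ℓ₀ :=
    ((hrd.hasDerivAt).pow 2).const_mul 2
  have h3 : HasDerivAt (fun ℓ => (2 * (r ℓ) ^ 2)⁻¹)
      (-(2 * (2 * r₀ ^ 1 * deriv r ℓ₀)) / (2 * r₀ ^ 2) ^ 2) ℓ₀ := h2.inv hne2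
  have h4 : HasDerivAt (fun ℓ => ℓ * (2 * (r ℓ) ^ 2)⁻¹)
      (1 * (2 * r₀ ^ 2)⁻¹ +
        ℓ₀ * (-(2 * (2 * r₀ ^ 1 * deriv r ℓ₀)) / (2 * r₀ ^ 2) ^ 2)) ℓ₀ :=
    (hasDerivAt_id ℓ₀).mul h3
  have h5 := h1.fun_add h4
  have heqfun : (fun ℓ => V (r ℓ) + ℓ / (2 * (r ℓ) ^ 2))
      = fun ℓ => V (r ℓ) + ℓ * (2 * (r ℓ) ^ 2)⁻¹ := by
    funext ℓ; rw [div_eq_mul_inv]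
  rw [heqfun]
  refine h5.congr_deriv ?_
  rw [hV']
  field_simp
  ring

theorem critical_values_separate
    (V : ℝ → ℝ) (hV : AnalyticOnNhd ℝ V (Ioi (0:ℝ)))
    (a b : ℝ) (r₁ r₂ : ℝ → ℝ) (ℓ₀ : ℝ) (hℓ₀ : ℓ₀ ∈ Ioo a b)
    (hr₁pos : ∀ ℓ ∈ Ioo a b, 0 < r₁ ℓ)
    (hr₂pos : ∀ ℓ ∈ Ioo a b, 0 < r₂ ℓ)
    (hr₁diff : ∀ ℓ ∈ Ioo a b, DifferentiableAt ℝ r₁ ℓ)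
    (hr₂diff : ∀ ℓ ∈ Ioo a b, DifferentiableAt ℝ r₂ ℓ)
    (hcrit₁ : ∀ ℓ ∈ Ioo a b,
      deriv (fun s => V s + ℓ / (2 * s ^ 2)) (r₁ ℓ) = 0)
    (hcrit₂ : ∀ ℓ ∈ Ioo a b,
      deriv (fun s => V s + ℓ / (2 * s ^ 2)) (r₂ ℓ) = 0)
    (hne : r₁ ℓ₀ ≠ r₂ ℓ₀)
    (heq : V (r₁ ℓ₀) + ℓ₀ / (2 * (r₁ ℓ₀) ^ 2)
         = V (r₂ ℓ₀) + ℓ₀ / (2 * (r₂ ℓ₀) ^ 2)) :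
    deriv (fun ℓ => V (r₁ ℓ) + ℓ / (2 * (r₁ ℓ) ^ 2)) ℓ₀
      ≠ deriv (fun ℓ => V (r₂ ℓ) + ℓ / (2 * (r₂ ℓ) ^ 2)) ℓ₀
    ∧ ∀ᶠ ℓ in 𝓝[≠] ℓ₀,
        V (r₁ ℓ) + ℓ / (2 * (r₁ ℓ) ^ 2)
          ≠ V (r₂ ℓ) + ℓ / (2 * (r₂ ℓ) ^ 2) := by
  have h1pos := hr₁pos ℓ₀ hℓ₀
  have h2pos := hr₂pos ℓ₀ hℓ₀
  have hD₁ : HasDerivAt (fun ℓ => V (r₁ ℓ) + ℓ / (2 * (r₁ ℓ) ^ 2))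
      (1 / (2 * (r₁ ℓ₀) ^ 2)) ℓ₀ :=
    envelope_hasDerivAt V r₁ ℓ₀ h1pos ((hV _ h1pos).differentiableAt)
      (hr₁diff ℓ₀ hℓ₀) (hcrit₁ ℓ₀ hℓ₀)
  have hD₂ : HasDerivAt (fun ℓ => V (r₂ ℓ) + ℓ / (2 * (r₂ ℓ) ^ 2))
      (1 / (2 * (r₂ ℓ₀) ^ 2)) ℓ₀ :=
    envelope_hasDerivAt V r₂ ℓ₀ h2pos ((hV _ h2pos).differentiableAt)
      (hr₂diff ℓ₀ hℓ₀) (hcrit₂ ℓ₀ hℓ₀)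
  have hcne : (1 : ℝ) / (2 * (r₁ ℓ₀) ^ 2) ≠ 1 / (2 * (r₂ ℓ₀) ^ 2) := by
    have h1 : (2:ℝ) * (r₁ ℓ₀) ^ 2 ≠ 2 * (r₂ ℓ₀) ^ 2 := by
      intro h
      have h3 : (r₁ ℓ₀ - r₂ ℓ₀) * (r₁ ℓ₀ + r₂ ℓ₀) = 0 := by linear_combination h / 2
      rcases mul_eq_zero.mp h3 with h4 | h4
      · exact hne (by linarith)
      · linarith
    intro h
    apply h1
    field_simp at h
    rw [h]
  constructor
  · rw [hD₁.deriv, hD₂.deriv]; exact hcne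
  · -- eventual separation
    set g : ℝ → ℝ := fun ℓ =>
      (V (r₁ ℓ) + ℓ / (2 * (r₁ ℓ) ^ 2)) - (V (r₂ ℓ) + ℓ / (2 * (r₂ ℓ) ^ 2))
      with hg
    have hgd : HasDerivAt g (1 / (2 * (r₁ ℓ₀) ^ 2) - 1 / (2 * (r₂ ℓ₀) ^ 2)) ℓ₀ :=
      hD₁.sub hD₂
    have hg0 : g ℓ₀ = 0 := by simp [hg, heq]
    have hslope : Tendsto (slope g ℓ₀) (𝓝[≠] ℓ₀)
        (𝓝 (1 / (2 * (r₁ ℓ₀) ^ 2) - 1 / (2 * (r₂ ℓ₀) ^ 2))) :=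
      hasDerivAt_iff_tendsto_slope.mp hgd
    have hcne' : (1:ℝ) / (2 * (r₁ ℓ₀) ^ 2) - 1 / (2 * (r₂ ℓ₀) ^ 2) ≠ 0 :=
      sub_ne_zero_of_ne hcne
    have hev : ∀ᶠ ℓ in 𝓝[≠] ℓ₀, slope g ℓ₀ ℓ ≠ 0 :=
      hslope.eventually_ne hcne'
    filter_upwards [hev, self_mem_nhdsWithin] with ℓ hsl hℓ
    intro habs
    apply hsl
    have : g ℓ = 0 := by simp [hg, habs]
    simp [slope_def_field, this, hg0]
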